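/- With the notation of the renewal lemma: if |h_u(x)| ≤ p_u for all x ≤ x₀ and all u, and |ψ_u(x)| ≤ p_u M e^{−τ|x|}, then for every k ≥ 0 and all x ≤ x₀ + (k+1)γ one has |h_u(x)| ≤ p_u (1 + M Σ_{j=0}^{k} sup_{y ∈ [x₀+jγ, x₀+(j+1)γ]} e^{−τ|y|}), where γ = min_e log(1/r_e). -/

import Mathlib

open Finset

/-- The inductive bound from the proof of the renewal lemma: if `|h_u(x)| ≤ p_u` for all
`x ≤ x₀`, and `|ψ_u(x)| ≤ p_u M e^{-τ|x|}`, then for every `k` and all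
`x ≤ x₀ + (k+1)γ`,
`|h_u(x)| ≤ p_u (1 + M ∑_{j=0}^{k} sup_{y ∈ [x₀+jγ, x₀+(j+1)γ]} e^{-τ|y|})`,
where `γ = min_e log(1/r_e)` and `p` is the Perron–Frobenius eigenvector. -/
theorem renewal_inductive_bound
    {V : Type*} [Fintype V] [DecidableEq V] [Nonempty V] {E : Type*} [Fintype E]
    [Nonempty E]
    (src tgt : E → V) (r : E → ℝ) (hr : ∀ e, 0 < r e ∧ r e < 1)
    (D : ℝ) (hD : 0 ≤ D)
    (p : V → ℝ) (hp : ∀ u, 0 < p u)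
    (hperron : ∀ u, p u = ∑ v, ∑ e ∈ univ.filter (fun e => src e = u ∧ tgt e = v),
      r e ^ D * p v)
    (h ψ : V → ℝ → ℝ) (M τ : ℝ) (hM : 0 < M) (hτ : 0 < τ)
    (hψ : ∀ u x, |ψ u x| ≤ p u * M * Real.exp (-τ * |x|))
    (heq : ∀ u x, h u x =
      (∑ v, ∑ e ∈ univ.filter (fun e => src e = u ∧ tgt e = v),
        r e ^ D * h v (x - Real.log (1 / r e))) + ψ u x)
    (γ : ℝ) (hγ : IsLeast ((fun e => Real.log (1 / r e)) '' Set.univ) γ)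
    (x₀ : ℝ) (hinit : ∀ u, ∀ x ≤ x₀, |h u x| ≤ p u) :
    ∀ k : ℕ, ∀ u, ∀ x ≤ x₀ + (k + 1) * γ,
      |h u x| ≤ p u * (1 + M * ∑ j ∈ Finset.range (k + 1),
        sSup ((fun y => Real.exp (-τ * |y|)) ''
          Set.Icc (x₀ + j * γ) (x₀ + (j + 1) * γ))) := by
  obtain ⟨⟨e₀, -, he₀⟩, hlb⟩ := hγ
  have hγpos : 0 < γ := by
    rw [← he₀]
    exact Real.log_pos ((one_lt_div (hr e₀).1).mpr (by simpa using (hr e₀).2))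
  have hγle : ∀ e, γ ≤ Real.log (1 / r e) := fun e =>
    hlb (Set.mem_image_of_mem _ (Set.mem_univ e))
  -- bounds on the suprema
  have hS : ∀ a b : ℝ, a ≤ b → ∀ x ∈ Set.Icc a b,
      Real.exp (-τ * |x|) ≤ sSup ((fun y => Real.exp (-τ * |y|)) '' Set.Icc a b) := by
    intro a b hab x hx
    apply le_csSup
    · refine ⟨1, ?_⟩
      rintro _ ⟨y, -, rfl⟩
      exact Real.exp_le_one_iff.mpr (by nlinarith [abs_nonneg y])
    · exact ⟨x, hx, rfl⟩
  have hSnonneg : ∀ a b : ℝ, a ≤ b →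
      0 ≤ sSup ((fun y => Real.exp (-τ * |y|)) '' Set.Icc a b) := fun a b hab =>
    le_trans (Real.exp_pos _).le (hS a b hab a ⟨le_refl a, hab⟩)
  -- the key step
  have step : ∀ (X c : ℝ), 0 ≤ c →
      (∀ v, ∀ y ≤ X, |h v y| ≤ p v * c) →
      ∀ u, ∀ x ≤ X + γ, |h u x| ≤ p u * c + p u * M *
        sSup ((fun y => Real.exp (-τ * |y|)) '' Set.Icc X (X + γ)) := by
    intro X c hc hbnd u x hx
    have hXle : X ≤ X + γ := by linarith
    have hS0 : 0 ≤ sSup ((fun y => Real.exp (-τ * |y|)) '' Set.Icc X (X + γ)) :=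
      hSnonneg X (X + γ) hXle
    by_cases hcase : x ≤ X
    · have h1 := hbnd u x hcase
      have h2 : 0 ≤ p u * M * sSup ((fun y => Real.exp (-τ * |y|)) '' Set.Icc X (X + γ)) :=
        mul_nonneg (mul_nonneg (hp u).le hM.le) hS0
      linarith
    · push_neg at hcase
      have h1 : |∑ v, ∑ e ∈ univ.filter (fun e => src e = u ∧ tgt e = v),
          r e ^ D * h v (x - Real.log (1 / r e))| ≤
          ∑ v, ∑ e ∈ univ.filter (fun e => src e = u ∧ tgt e = v),
            r e ^ D * (p v * c) := by
        refine (Finset.abs_sum_le_sum_abs _ _).trans (Finset.sum_le_sum fun v _ => ?_)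
        refine (Finset.abs_sum_le_sum_abs _ _).trans (Finset.sum_le_sum fun e he => ?_)
        rw [abs_mul, abs_of_nonneg (Real.rpow_nonneg (hr e).1.le D)]
        refine mul_le_mul_of_nonneg_left ?_ (Real.rpow_nonneg (hr e).1.le D)
        exact hbnd v _ (by have := hγle e; linarith)
      have h2 : ∑ v, ∑ e ∈ univ.filter (fun e => src e = u ∧ tgt e = v),
          r e ^ D * (p v * c) = p u * c := by
        have hfac : ∀ v, ∑ e ∈ univ.filter (fun e => src e = u ∧ tgt e = v),
            r e ^ D * (p v * c) = (∑ e ∈ univ.filter (fun e => src e = u ∧ tgt e = v),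
              r e ^ D * p v) * c := fun v => by
          rw [Finset.sum_mul]; exact Finset.sum_congr rfl fun e _ => by ring
        simp_rw [hfac]
        rw [← Finset.sum_mul, ← hperron u]
      have h3 : Real.exp (-τ * |x|) ≤
          sSup ((fun y => Real.exp (-τ * |y|)) '' Set.Icc X (X + γ)) :=
        hS X (X + γ) hXle x ⟨hcase.le, hx⟩
      have h4 := hψ u x
      rw [heq u x]
      calc |(∑ v, ∑ e ∈ univ.filter (fun e => src e = u ∧ tgt e = v),
              r e ^ D * h v (x - Real.log (1 / r e))) + ψ u x|
          ≤ |∑ v, ∑ e ∈ univ.filter (fun e => src e = u ∧ tgt e = v),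
              r e ^ D * h v (x - Real.log (1 / r e))| + |ψ u x| := abs_add_le _ _
        _ ≤ p u * c + p u * M * Real.exp (-τ * |x|) :=
            add_le_add (h1.trans_eq h2) h4
        _ ≤ _ := add_le_add le_rfl
            (mul_le_mul_of_nonneg_left h3 (mul_nonneg (hp u).le hM.le))
  intro k
  induction k with
  | zero =>
    intro u x hx
    have e1 : x₀ + ((0 : ℕ) : ℝ) * γ = x₀ := by push_cast; ring
    have e2 : x₀ + (((0 : ℕ) : ℝ) + 1) * γ = x₀ + γ := by push_cast; ring
    have hst := step x₀ 1 zero_le_one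
      (fun v y hy => by simpa using hinit v y hy) u x (by push_cast at hx; linarith)
    rw [Finset.sum_range_one, e1, e2]
    calc |h u x| ≤ p u * 1 + p u * M *
          sSup ((fun y => Real.exp (-τ * |y|)) '' Set.Icc x₀ (x₀ + γ)) := hst
      _ = _ := by ring
  | succ k ih =>
    intro u x hx
    have hSj : ∀ j : ℕ, 0 ≤ sSup ((fun y => Real.exp (-τ * |y|)) ''
        Set.Icc (x₀ + j * γ) (x₀ + (j + 1) * γ)) := fun j =>
      hSnonneg _ _ (by linarith)
    set c : ℝ := 1 + M * ∑ j ∈ Finset.range (k + 1),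
        sSup ((fun y => Real.exp (-τ * |y|)) ''
          Set.Icc (x₀ + j * γ) (x₀ + (j + 1) * γ)) with hcdef
    have hc0 : 0 ≤ c := by
      have : 0 ≤ ∑ j ∈ Finset.range (k + 1),
          sSup ((fun y => Real.exp (-τ * |y|)) ''
            Set.Icc (x₀ + j * γ) (x₀ + (j + 1) * γ)) :=
        Finset.sum_nonneg fun j _ => hSj j
      nlinarith
    have hst := step (x₀ + ((k : ℝ) + 1) * γ) c hc0 (fun v y hy => ih v y hy)
      u x (by push_cast at hx; linarith)
    have e1 : x₀ + ((k : ℝ) + 1) * γ = x₀ + ((k + 1 : ℕ) : ℝ) * γ := by push_cast; ring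
    have e2 : x₀ + ((k + 1 : ℕ) : ℝ) * γ + γ = x₀ + (((k + 1 : ℕ) : ℝ) + 1) * γ := by
      push_cast; ring
    rw [e1] at hst
    rw [e2] at hst
    rw [Finset.sum_range_succ]
    calc |h u x| ≤ p u * c + p u * M *
          sSup ((fun y => Real.exp (-τ * |y|)) ''
            Set.Icc (x₀ + ((k + 1 : ℕ) : ℝ) * γ) (x₀ + (((k + 1 : ℕ) : ℝ) + 1) * γ)) := hst
      _ = _ := by rw [hcdef]; ring
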